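/- For every n ≥ 2, f(n, C₄) ≤ 2^{n-2}; that is, the power set 𝒫(n) can be partitioned into 2^{n-2} parts each of which is C₄-free. -/
import Mathlib


/-- Four distinct sets `A, B, C, D ⊆ [n]` form a Berge four-cycle in that cyclic order if
there exist pairwise distinct elements `x₁ ∈ A ∩ B`, `x₂ ∈ B ∩ C`, `x₃ ∈ C ∩ D`,
`x₄ ∈ D ∩ A`. -/
def BergeC4 {n : ℕ} (A B C D : Finset (Fin n)) : Prop :=
  A ≠ B ∧ A ≠ C ∧ A ≠ D ∧ B ≠ C ∧ B ≠ D ∧ C ≠ D ∧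
    ∃ x₁ x₂ x₃ x₄ : Fin n,
      x₁ ≠ x₂ ∧ x₁ ≠ x₃ ∧ x₁ ≠ x₄ ∧ x₂ ≠ x₃ ∧ x₂ ≠ x₄ ∧ x₃ ≠ x₄ ∧
      x₁ ∈ A ∩ B ∧ x₂ ∈ B ∩ C ∧ x₃ ∈ C ∩ D ∧ x₄ ∈ D ∩ A

/-- A family of subsets of `[n]` is `C₄`-free if no four of its members, in any cyclic
order, form a Berge four-cycle. -/
def C4Free {n : ℕ} (F : Set (Finset (Fin n))) : Prop :=
  ∀ A ∈ F, ∀ B ∈ F, ∀ C ∈ F, ∀ D ∈ F, ¬ BergeC4 A B C D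

namespace FC4

variable {n : ℕ}

def Rmap (z o : Fin n) (X : Finset (Fin n)) : Finset (Fin n) :=
  if z ∈ X ↔ o ∈ X then X \ {z, o} else Xᶜ \ {z, o}

lemma not_mem_Rmap_left (z o : Fin n) (X : Finset (Fin n)) : z ∉ Rmap z o X := by
  unfold Rmap; split <;> simp

lemma not_mem_Rmap_right (z o : Fin n) (X : Finset (Fin n)) : o ∉ Rmap z o X := by
  unfold Rmap; split <;> simp

lemma classify (z o : Fin n) (X : Finset (Fin n)) :
    X = Rmap z o X ∨ X = Rmap z o X ∪ {z, o} ∨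
    X = ((Rmap z o X)ᶜ \ {z, o}) ∪ {z} ∨ X = ((Rmap z o X)ᶜ \ {z, o}) ∪ {o} := by
  unfold Rmap
  by_cases hz : z ∈ X <;> by_cases ho : o ∈ X
  · right; left; rw [if_pos (iff_of_true hz ho)]
    ext x; simp only [Finset.mem_union, Finset.mem_sdiff, Finset.mem_insert, Finset.mem_singleton]
    by_cases h1 : x = z <;> by_cases h2 : x = o <;> simp_all
  · right; right; left; rw [if_neg (by tauto)]
    ext x
    simp only [Finset.mem_union, Finset.mem_sdiff, Finset.mem_compl, Finset.mem_insert,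
      Finset.mem_singleton]
    by_cases h1 : x = z <;> by_cases h2 : x = o <;> simp_all
  · right; right; right; rw [if_neg (by tauto)]
    ext x
    simp only [Finset.mem_union, Finset.mem_sdiff, Finset.mem_compl, Finset.mem_insert,
      Finset.mem_singleton]
    by_cases h1 : x = z <;> by_cases h2 : x = o <;> simp_all
  · left; rw [if_pos (iff_of_false hz ho)]
    ext x; simp only [Finset.mem_sdiff, Finset.mem_insert, Finset.mem_singleton]
    by_cases h1 : x = z <;> by_cases h2 : x = o <;> simp_all

lemma disj_z {z o : Fin n} {T : Finset (Fin n)} (hz : z ∉ T) :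
    ∀ x, x ∉ T ∩ ((Tᶜ \ {z, o}) ∪ {z}) := by
  intro x hx
  simp only [Finset.mem_inter, Finset.mem_union, Finset.mem_sdiff, Finset.mem_compl,
    Finset.mem_insert, Finset.mem_singleton] at hx
  rcases hx with ⟨h1, h2 | rfl⟩
  · exact h2.1 h1
  · exact hz h1

lemma disj_z' {z o : Fin n} {T : Finset (Fin n)} (hz : z ∉ T) :
    ∀ x, x ∉ ((Tᶜ \ {z, o}) ∪ {z}) ∩ T := by
  intro x hx
  rw [Finset.inter_comm] at hx
  exact disj_z hz x hx

lemma disj_o {z o : Fin n} {T : Finset (Fin n)} (ho : o ∉ T) :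
    ∀ x, x ∉ T ∩ ((Tᶜ \ {z, o}) ∪ {o}) := by
  intro x hx
  simp only [Finset.mem_inter, Finset.mem_union, Finset.mem_sdiff, Finset.mem_compl,
    Finset.mem_insert, Finset.mem_singleton] at hx
  rcases hx with ⟨h1, h2 | rfl⟩
  · exact h2.1 h1
  · exact ho h1

lemma disj_o' {z o : Fin n} {T : Finset (Fin n)} (ho : o ∉ T) :
    ∀ x, x ∉ ((Tᶜ \ {z, o}) ∪ {o}) ∩ T := by
  intro x hx
  rw [Finset.inter_comm] at hx
  exact disj_o ho x hx

lemma abstract_bash {P Q R S : Finset (Fin n)}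
    (hPR : ∀ x, x ∉ P ∩ R) (hRP : ∀ x, x ∉ R ∩ P)
    (hPS : ∀ x, x ∉ P ∩ S) (hSP : ∀ x, x ∉ S ∩ P)
    {A B C D : Finset (Fin n)}
    (cA : A = P ∨ A = Q ∨ A = R ∨ A = S)
    (cB : B = P ∨ B = Q ∨ B = R ∨ B = S)
    (cC : C = P ∨ C = Q ∨ C = R ∨ C = S)
    (cD : D = P ∨ D = Q ∨ D = R ∨ D = S) :
    ¬ BergeC4 A B C D := by
  intro hb
  obtain ⟨hAB, hAC, hAD, hBC, hBD, hCD, x₁, x₂, x₃, x₄, _, _, _, _, _, _,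
    hx₁, hx₂, hx₃, hx₄⟩ := hb
  rcases cA with rfl | rfl | rfl | rfl <;> rcases cB with rfl | rfl | rfl | rfl <;>
    rcases cC with rfl | rfl | rfl | rfl <;> rcases cD with rfl | rfl | rfl | rfl <;>
    first
      | exact hAB rfl
      | exact hAC rfl
      | exact hAD rfl
      | exact hBC rfl
      | exact hBD rfl
      | exact hCD rfl
      | exact hPR x₁ hx₁
      | exact hPR x₂ hx₂
      | exact hPR x₃ hx₃
      | exact hPR x₄ hx₄
      | exact hRP x₁ hx₁
      | exact hRP x₂ hx₂
      | exact hRP x₃ hx₃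
      | exact hRP x₄ hx₄
      | exact hPS x₁ hx₁
      | exact hPS x₂ hx₂
      | exact hPS x₃ hx₃
      | exact hPS x₄ hx₄
      | exact hSP x₁ hx₁
      | exact hSP x₂ hx₂
      | exact hSP x₃ hx₃
      | exact hSP x₄ hx₄

/-- The fiber of `Rmap z o` over `T` is C₄-free. -/
lemma fiber_C4Free {z o : Fin n} {T : Finset (Fin n)} (hz : z ∉ T) (ho : o ∉ T) :
    C4Free {X : Finset (Fin n) | Rmap z o X = T} := by
  intro A hA B hB C hC D hD hb
  simp only [Set.mem_setOf_eq] at hA hB hC hD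
  have cA := classify z o A; rw [hA] at cA
  have cB := classify z o B; rw [hB] at cB
  have cC := classify z o C; rw [hC] at cC
  have cD := classify z o D; rw [hD] at cD
  exact abstract_bash (disj_z hz) (disj_z' hz) (disj_o ho) (disj_o' ho) cA cB cC cD hb

end FC4

/-- For every `n ≥ 2`, the power set of `[n]` can be partitioned into `2 ^ (n - 2)`
`C₄`-free parts, i.e. `f(n, C₄) ≤ 2 ^ (n - 2)`. -/
theorem f_C4_upper (n : ℕ) (hn : 2 ≤ n) :
    ∃ c : Finset (Fin n) → Fin (2 ^ (n - 2)),
      ∀ i : Fin (2 ^ (n - 2)), C4Free {A | c A = i} := by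
  set z : Fin n := ⟨0, by omega⟩ with hzdef
  set o : Fin n := ⟨1, by omega⟩ with hodef
  -- encode subsets avoiding z, o into Fin (2^(n-2))
  have hcard : Fintype.card (Finset (Fin (n - 2))) = 2 ^ (n - 2) := by simp
  set f : Fin (n - 2) → Fin n := fun i => ⟨i.val + 2, by omega⟩ with hfdef
  set e : Finset (Fin n) → Finset (Fin (n - 2)) :=
    fun S => Finset.univ.filter (fun i => f i ∈ S) with hedef
  have einj : ∀ S S' : Finset (Fin n), z ∉ S → o ∉ S → z ∉ S' → o ∉ S' →
      e S = e S' → S = S' := by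
    intro S S' hzS hoS hzS' hoS' h
    ext x
    by_cases hxz : x = z
    · subst hxz; simp [hzS, hzS']
    · by_cases hxo : x = o
      · subst hxo; simp [hoS, hoS']
      · have hx2 : 2 ≤ x.val := by
          have h1 : x.val ≠ 0 := fun hc => hxz (Fin.ext (by simp [hzdef, hc]))
          have h2 : x.val ≠ 1 := fun hc => hxo (Fin.ext (by simp [hodef, hc]))
          omega
        set i : Fin (n - 2) := ⟨x.val - 2, by omega⟩ with hidef
        have hfi : f i = x := Fin.ext (by simp [hfdef, hidef]; omega)
        have := Finset.ext_iff.mp h i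
        simp only [hedef, Finset.mem_filter, Finset.mem_univ, true_and, hfi] at this
        exact this
  refine ⟨fun X => finCongr hcard (Fintype.equivFin _ (e (FC4.Rmap z o X))), fun i => ?_⟩
  intro A hA B hB C hC D hD hb
  simp only [Set.mem_setOf_eq] at hA hB hC hD
  have key : ∀ X Y : Finset (Fin n),
      finCongr hcard (Fintype.equivFin _ (e (FC4.Rmap z o X))) =
      finCongr hcard (Fintype.equivFin _ (e (FC4.Rmap z o Y))) →
      FC4.Rmap z o X = FC4.Rmap z o Y := by
    intro X Y h
    have h1 := (finCongr hcard).injective h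
    have h2 := (Fintype.equivFin _).injective h1
    exact einj _ _ (FC4.not_mem_Rmap_left z o X) (FC4.not_mem_Rmap_right z o X)
      (FC4.not_mem_Rmap_left z o Y) (FC4.not_mem_Rmap_right z o Y) h2
  have hTB := key B A (hB.trans hA.symm)
  have hTC := key C A (hC.trans hA.symm)
  have hTD := key D A (hD.trans hA.symm)
  exact FC4.fiber_C4Free (FC4.not_mem_Rmap_left z o A) (FC4.not_mem_Rmap_right z o A)
    A rfl B hTB C hTC D hTD hb
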